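/- Let (M,g) be a complete Riemannian manifold and F : M → ℝ a C² function such that α‖v‖² ≤ Hess F(v,v) ≤ β‖v‖² for all tangent vectors v, with 0 < α ≤ β. Then F has a unique minimizer x*, and for any fixed stepsize t ∈ (0, 1/β], the gradient descent sequence x_{k+1} = exp_{x_k}(−t grad F(x_k)) satisfies d(x_k, x*) ≤ c q^k, where c = sqrt((2/α)(F(x_0) − F(x*))) and q = sqrt(1 − (t/2)α(1 + α/β)). -/

import Mathlib

open scoped RealInnerProductSpace

open Filter

lemma taylor_up' (f : ℝ → ℝ) (hf : ContDiff ℝ 2 f) (M : ℝ)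
    (hM : ∀ s, deriv (deriv f) s ≤ M) : f 1 ≤ f 0 + deriv f 0 + M / 2 := by
  have hd1 : Differentiable ℝ f := hf.differentiable (by norm_num)
  have hcd1 : ContDiff ℝ 1 (deriv f) := by
    have hf' : ContDiff ℝ (1+1) f := by exact_mod_cast hf
    exact (contDiff_succ_iff_deriv.mp hf').2.2
  have hd2 : Differentiable ℝ (deriv f) := hcd1.differentiable (by norm_num)
  have hA : ∀ s : ℝ, 0 ≤ s → deriv f s ≤ deriv f 0 + M * s := by
    intro s hs
    have hφd : ∀ u : ℝ, HasDerivAt (fun u => deriv f u - M * u) (deriv (deriv f) u - M) u := by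
      intro u
      exact ((hd2 u).hasDerivAt).sub (by simpa using (hasDerivAt_id u).const_mul M)
    have hanti : Antitone (fun u => deriv f u - M * u) := by
      apply antitone_of_deriv_nonpos
      · exact fun u => (hφd u).differentiableAt
      · intro u
        rw [(hφd u).deriv]
        linarith [hM u]
    have := hanti hs
    simp only [mul_zero, sub_zero] at this
    linarith
  have hkd : ∀ u : ℝ, HasDerivAt (fun u => f u - deriv f 0 * u - M * u ^ 2 / 2)
      (deriv f u - deriv f 0 - M * u) u := by
    intro u
    have h1 := (hd1 u).hasDerivAt
    have h2' : HasDerivAt (fun u : ℝ => deriv f 0 * u) (deriv f 0) u := by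
      simpa using (hasDerivAt_id u).const_mul (deriv f 0)
    have h3 : HasDerivAt (fun u : ℝ => M * u ^ 2 / 2) (M * u) u := by
      have := ((hasDerivAt_pow 2 u).const_mul M).div_const 2
      refine this.congr_deriv ?_
      ring
    exact (h1.sub h2').sub h3
  have hanti : AntitoneOn (fun u => f u - deriv f 0 * u - M * u ^ 2 / 2) (Set.Ici 0) := by
    apply antitoneOn_of_deriv_nonpos (convex_Ici 0)
    · exact Continuous.continuousOn (by fun_prop)
    · intro u hu
      exact ((hkd u).differentiableAt).differentiableWithinAt
    · intro u hu
      rw [interior_Ici] at hu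
      rw [(hkd u).deriv]
      have := hA u (le_of_lt hu)
      linarith
  have := hanti (Set.self_mem_Ici) (by norm_num : (1:ℝ) ∈ Set.Ici 0) zero_le_one
  simp only at this
  linarith

lemma taylor_lo' (f : ℝ → ℝ) (hf : ContDiff ℝ 2 f) (m : ℝ)
    (hm : ∀ s, m ≤ deriv (deriv f) s) : f 0 + deriv f 0 + m / 2 ≤ f 1 := by
  have hdneg : deriv (fun s => -f s) = fun s => -deriv f s := funext fun s => deriv.neg
  have key := taylor_up' (fun s => -f s) hf.neg (-m) (by
    intro s
    rw [hdneg]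
    rw [show deriv (fun s => -deriv f s) s = -(deriv (deriv f) s) from deriv.neg]
    linarith [hm s])
  have h0 : deriv (fun s => -f s) 0 = -deriv f 0 := deriv.neg
  simp only [h0] at key
  linarith

lemma le_of_sq_le_sq' (a b : ℝ) (ha : 0 ≤ a) (hb : 0 ≤ b) (h : a ^ 2 ≤ b ^ 2) : a ≤ b := by
  nlinarith


/-- A packaging of the data of a complete Riemannian manifold `M` needed to state
gradient-descent results: tangent spaces realized as subspaces of an ambient Hilbert
space `V` (as provided, e.g., by the Nash embedding theorem), an exponential map, and
the existence of minimizing geodesics (Hopf–Rinow). The curve `t ↦ exp x (t • v)`,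
`v ∈ tangent x`, is the geodesic through `x` with velocity `v`, and the distance on `M`
is the Riemannian distance. -/
structure RiemannianData (M : Type*) (V : Type*) [MetricSpace M]
    [NormedAddCommGroup V] [InnerProductSpace ℝ V] where
  /-- the tangent space at each point -/
  tangent : M → Submodule ℝ V
  /-- the Riemannian exponential map -/
  exp : M → V → M
  exp_zero : ∀ x, exp x 0 = x
  /-- geodesics emanating from a point do not increase distance faster than their speed -/
  dist_exp_le : ∀ x, ∀ v ∈ tangent x, dist x (exp x v) ≤ ‖v‖
  /-- Hopf–Rinow: any two points are joined by a minimizing geodesic -/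
  minimizing : ∀ x y : M, ∃ v ∈ tangent x, exp x v = y ∧ ‖v‖ = dist x y ∧
    ∀ s t : ℝ, s ∈ Set.Icc (0:ℝ) 1 → t ∈ Set.Icc (0:ℝ) 1 →
      dist (exp x (s • v)) (exp x (t • v)) = |s - t| * ‖v‖

set_option maxHeartbeats 1600000 in
/-- Riemannian gradient descent with fixed stepsize: if `F : M → ℝ` is
`C²` with `α‖v‖² ≤ Hess F(v,v) ≤ β‖v‖²` for all tangent vectors (the Hessian on `(v,v)`
being the second derivative of `F` along geodesics), `0 < α ≤ β`, then `F` has a unique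
minimizer `x*`, and for any stepsize `t ∈ (0, 1/β]` the gradient descent iterates satisfy
`d(x_k, x*) ≤ c qᵏ` with `c = √((2/α)(F(x₀) - F(x*)))` and `q = √(1 - (t/2)α(1 + α/β))`. -/
theorem stmt9 {M V : Type*} [MetricSpace M] [CompleteSpace M]
    [NormedAddCommGroup V] [InnerProductSpace ℝ V]
    (D : RiemannianData M V) (F : M → ℝ)
    (hC2 : ∀ x : M, ∀ v ∈ D.tangent x, ContDiff ℝ 2 (fun s : ℝ => F (D.exp x (s • v))))
    (gradF : M → V) (hgrad_mem : ∀ x, gradF x ∈ D.tangent x)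
    (hgrad : ∀ x : M, ∀ v ∈ D.tangent x,
      deriv (fun s : ℝ => F (D.exp x (s • v))) 0 = ⟪gradF x, v⟫)
    (α β : ℝ) (hα : 0 < α) (hαβ : α ≤ β)
    (hHess : ∀ x : M, ∀ v ∈ D.tangent x, ∀ t : ℝ,
      α * ‖v‖ ^ 2 ≤ deriv (deriv (fun s : ℝ => F (D.exp x (s • v)))) t ∧
      deriv (deriv (fun s : ℝ => F (D.exp x (s • v)))) t ≤ β * ‖v‖ ^ 2)
    (t : ℝ) (ht : 0 < t) (ht' : t ≤ 1 / β)
    (x : ℕ → M) (hiter : ∀ k, x (k + 1) = D.exp (x k) (-(t • gradF (x k)))) :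
    ∃ xstar : M, (∀ y, F xstar ≤ F y) ∧ (∀ y, (∀ z, F y ≤ F z) → y = xstar) ∧
      ∀ k : ℕ, dist (x k) xstar
        ≤ Real.sqrt ((2 / α) * (F (x 0) - F xstar))
          * (Real.sqrt (1 - (t / 2) * α * (1 + α / β))) ^ k := by
  have hβ : 0 < β := lt_of_lt_of_le hα hαβ
  have htβ : t * β ≤ 1 := by
    rw [le_div_iff₀ hβ] at ht'
    linarith
  have htα : t * α ≤ 1 := le_trans (by nlinarith) htβ
  have hNe : Nonempty M := ⟨x 0⟩
  -- key two-sided estimate along minimizing geodesics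
  have key : ∀ p y : M, ∃ v ∈ D.tangent p, ‖v‖ = dist p y ∧
      F p + ⟪gradF p, v⟫ + α / 2 * dist p y ^ 2 ≤ F y ∧
      F y ≤ F p + ⟪gradF p, v⟫ + β / 2 * dist p y ^ 2 := by
    intro p y
    obtain ⟨v, hv, hexp, hnorm, -⟩ := D.minimizing p y
    refine ⟨v, hv, hnorm, ?_, ?_⟩ <;>
    · have hf2 := hC2 p v hv
      have hf0 : F (D.exp p ((0:ℝ) • v)) = F p := by rw [zero_smul, D.exp_zero]
      have hf1 : F (D.exp p ((1:ℝ) • v)) = F y := by rw [one_smul, hexp]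
      have hd0 := hgrad p v hv
      have up := taylor_up' _ hf2 (β * ‖v‖ ^ 2) (fun s => (hHess p v hv s).2)
      have lo := taylor_lo' _ hf2 (α * ‖v‖ ^ 2) (fun s => (hHess p v hv s).1)
      rw [hf0, hf1, hd0, hnorm] at up lo
      nlinarith [up, lo]
  -- descent step
  have descent : ∀ k, F (x (k + 1)) ≤ F (x k) - t / 2 * ‖gradF (x k)‖ ^ 2 := by
    intro k
    set p := x k
    set g := gradF p with hg
    have hv : -(t • g) ∈ D.tangent p :=
      Submodule.neg_mem _ (Submodule.smul_mem _ _ (hgrad_mem p))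
    have hf0 : F (D.exp p ((0:ℝ) • (-(t • g)))) = F p := by rw [zero_smul, D.exp_zero]
    have hf1 : F (D.exp p ((1:ℝ) • (-(t • g)))) = F (x (k + 1)) := by
      rw [one_smul, hiter k]
    have hd0 : deriv (fun s : ℝ => F (D.exp p (s • (-(t • g))))) 0 = -(t * ‖g‖ ^ 2) := by
      rw [hgrad p _ hv, inner_neg_right, real_inner_smul_right, real_inner_self_eq_norm_sq]
    have hn : ‖-(t • g)‖ ^ 2 = t ^ 2 * ‖g‖ ^ 2 := by
      rw [norm_neg, norm_smul, mul_pow, Real.norm_eq_abs, sq_abs]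
    have up := taylor_up' _ (hC2 p _ hv) (β * ‖-(t • g)‖ ^ 2) (fun s => (hHess p _ hv s).2)
    rw [hf0, hf1, hd0, hn] at up
    nlinarith [sq_nonneg ‖g‖, up]
  -- per-pair PL inequality
  have PL : ∀ p y : M, F p - F y ≤ ‖gradF p‖ ^ 2 / (2 * α) := by
    intro p y
    obtain ⟨v, hv, hnorm, lo, -⟩ := key p y
    have hin : |⟪gradF p, v⟫| ≤ ‖gradF p‖ * ‖v‖ := abs_real_inner_le_norm _ _
    rw [abs_le] at hin
    rw [← hnorm] at lo
    rw [le_div_iff₀ (by positivity : (0:ℝ) < 2 * α)]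
    nlinarith [sq_nonneg (‖gradF p‖ - α * ‖v‖), hin.1, hα, lo]
  -- infimum
  have hbdd : BddBelow (Set.range F) := by
    refine ⟨F (x 0) - ‖gradF (x 0)‖ ^ 2 / (2 * α), ?_⟩
    rintro _ ⟨y, rfl⟩
    have := PL (x 0) y
    linarith
  set Fs := ⨅ y, F y with hFs
  have hFs_le : ∀ y, Fs ≤ F y := fun y => ciInf_le hbdd y
  have hPLs : ∀ p, F p - Fs ≤ ‖gradF p‖ ^ 2 / (2 * α) := by
    intro p
    have : F p - ‖gradF p‖ ^ 2 / (2 * α) ≤ Fs :=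
      le_ciInf fun y => by linarith [PL p y]
    linarith
  set E0 := F (x 0) - Fs with hE0def
  have hE0 : 0 ≤ E0 := by have := hFs_le (x 0); linarith
  set r := 1 - t * α with hrdef
  have hr0 : 0 ≤ r := by linarith
  have hr1 : r < 1 := by nlinarith
  -- linear rate on function values
  have hE : ∀ k, F (x k) - Fs ≤ E0 * r ^ k := by
    intro k
    induction k with
    | zero => simp [hE0def]
    | succ k ih =>
      have h1 := descent k
      have h2 := hPLs (x k)
      have h3 : 0 ≤ F (x k) - Fs := by have := hFs_le (x k); linarith
      have h4 : 2 * α * (F (x k) - Fs) ≤ ‖gradF (x k)‖ ^ 2 := by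
        have := (le_div_iff₀ (by positivity : (0:ℝ) < 2 * α)).mp h2
        linarith
      have h5 : F (x (k + 1)) - Fs ≤ r * (F (x k) - Fs) := by nlinarith
      calc F (x (k + 1)) - Fs ≤ r * (F (x k) - Fs) := h5
        _ ≤ r * (E0 * r ^ k) := by nlinarith
        _ = E0 * r ^ (k + 1) := by ring
  have hEnn : ∀ k, 0 ≤ F (x k) - Fs := fun k => by have := hFs_le (x k); linarith
  -- gradient norm bound
  have hgn : ∀ k, t ^ 2 * ‖gradF (x k)‖ ^ 2 ≤ 2 * t * E0 * r ^ k := by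
    intro k
    have h1 := descent k
    have h2 := hEnn (k + 1)
    have h3 := hE k
    nlinarith
  set C := Real.sqrt (2 * t * E0) with hCdef
  set qr := Real.sqrt r with hqrdef
  have hqr0 : 0 ≤ qr := Real.sqrt_nonneg r
  have hqr1 : qr < 1 := by
    rw [hqrdef, show (1:ℝ) = Real.sqrt 1 from (Real.sqrt_one).symm]
    exact Real.sqrt_lt_sqrt hr0 hr1
  have hstep : ∀ k, t * ‖gradF (x k)‖ ≤ C * qr ^ k := by
    intro k
    apply le_of_sq_le_sq' _ _ (by positivity) (by positivity)
    have hC2' : C ^ 2 = 2 * t * E0 := Real.sq_sqrt (by positivity)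
    have hq2 : qr ^ 2 = r := Real.sq_sqrt hr0
    calc (t * ‖gradF (x k)‖) ^ 2 = t ^ 2 * ‖gradF (x k)‖ ^ 2 := by ring
      _ ≤ 2 * t * E0 * r ^ k := hgn k
      _ = C ^ 2 * (qr ^ 2) ^ k := by rw [hC2', hq2]
      _ = (C * qr ^ k) ^ 2 := by ring
  have hdstep : ∀ k, dist (x k) (x (k + 1)) ≤ C * qr ^ k := by
    intro k
    have hv : -(t • gradF (x k)) ∈ D.tangent (x k) :=
      Submodule.neg_mem _ (Submodule.smul_mem _ _ (hgrad_mem (x k)))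
    have := D.dist_exp_le (x k) _ hv
    rw [← hiter k] at this
    refine le_trans this ?_
    rw [norm_neg, norm_smul, Real.norm_eq_abs, abs_of_pos ht]
    exact hstep k
  -- Cauchy and limit
  have hcauchy : CauchySeq x := cauchySeq_of_le_geometric qr C hqr1 hdstep
  obtain ⟨xs, hxs⟩ := cauchySeq_tendsto_of_complete hcauchy
  -- F (x k) → Fs
  have htend_r : Tendsto (fun k : ℕ => r ^ k) atTop (nhds 0) :=
    tendsto_pow_atTop_nhds_zero_of_lt_one hr0 hr1
  have htend_qr : Tendsto (fun k : ℕ => qr ^ k) atTop (nhds 0) :=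
    tendsto_pow_atTop_nhds_zero_of_lt_one hqr0 hqr1
  have hFtend : Tendsto (fun k => F (x k)) atTop (nhds Fs) := by
    have h1 : Tendsto (fun k => F (x k) - Fs) atTop (nhds 0) := by
      apply squeeze_zero hEnn hE
      simpa using htend_r.const_mul E0
    have := h1.add_const Fs
    simpa using this
  have hgtend : Tendsto (fun k => ‖gradF (x k)‖) atTop (nhds 0) := by
    apply squeeze_zero (fun k => norm_nonneg _) (g := fun k => (C / t) * qr ^ k)
    · intro k
      rw [div_mul_eq_mul_div, le_div_iff₀ ht]
      linarith [hstep k]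
    · simpa using htend_qr.const_mul (C / t)
  have hdtend : Tendsto (fun k => dist (x k) xs) atTop (nhds 0) :=
    tendsto_iff_dist_tendsto_zero.mp hxs
  -- F xs = Fs
  have hFxs : F xs = Fs := by
    refine le_antisymm ?_ (hFs_le xs)
    have hb : ∀ k, F xs ≤ F (x k) + ‖gradF (x k)‖ * dist (x k) xs
        + β / 2 * dist (x k) xs ^ 2 := by
      intro k
      obtain ⟨v, hv, hnorm, -, up⟩ := key (x k) xs
      have hin : |⟪gradF (x k), v⟫| ≤ ‖gradF (x k)‖ * ‖v‖ := abs_real_inner_le_norm _ _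
      rw [abs_le, hnorm] at hin
      linarith [hin.2, up]
    have hrhs : Tendsto (fun k => F (x k) + ‖gradF (x k)‖ * dist (x k) xs
        + β / 2 * dist (x k) xs ^ 2) atTop (nhds Fs) := by
      have := (hFtend.add (hgtend.mul hdtend)).add
        ((tendsto_const_nhds (x := β / 2)).mul (hdtend.pow 2))
      simpa using this
    exact ge_of_tendsto' hrhs hb
  have hmin : ∀ y, F xs ≤ F y := fun y => hFxs ▸ hFs_le y
  -- gradient vanishes at xs
  have hgxs : gradF xs = 0 := by
    have hv := hgrad_mem xs
    have hloc : IsLocalMin (fun s : ℝ => F (D.exp xs (s • gradF xs))) 0 := by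
      apply Filter.Eventually.of_forall
      intro s
      simpa [zero_smul, D.exp_zero] using hmin (D.exp xs (s • gradF xs))
    have h0 := hloc.deriv_eq_zero
    rw [hgrad xs _ hv, real_inner_self_eq_norm_sq] at h0
    have : ‖gradF xs‖ = 0 := by
      have := sq_eq_zero_iff.mp h0
      exact this
    exact norm_eq_zero.mp this
  -- quadratic growth
  have hgrowth : ∀ y, F xs + α / 2 * dist xs y ^ 2 ≤ F y := by
    intro y
    obtain ⟨v, hv, hnorm, lo, -⟩ := key xs y
    rw [hgxs] at lo
    simpa using lo
  clear_value Fs E0 r C qr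
  refine ⟨xs, hmin, ?_, ?_⟩
  · -- uniqueness
    intro y hy
    have h1 := hgrowth y
    have h2 := hy xs
    have : dist xs y ^ 2 ≤ 0 := by nlinarith
    have hd0 : dist xs y = 0 := by nlinarith [dist_nonneg (x := xs) (y := y)]
    rw [dist_comm] at hd0
    exact dist_eq_zero.mp hd0
  · -- the rate
    intro k
    set Q := 1 - t / 2 * α * (1 + α / β) with hQdef
    have hab : α / β ≤ 1 := (div_le_one hβ).mpr hαβ
    have hab0 : 0 < α / β := div_pos hα hβ
    have hh : t * α * (α / β) ≤ t * α * 1 :=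
      mul_le_mul_of_nonneg_left hab (le_of_lt (mul_pos ht hα))
    have hQ0 : 0 ≤ Q := by rw [hQdef]; nlinarith [hh, htα]
    have hrQ : r ≤ Q := by
      rw [hrdef, hQdef]
      nlinarith [hh, mul_pos ht hα]
    have hdk : dist (x k) xs ^ 2 ≤ (2 / α) * (E0 * r ^ k) := by
      have h1 := hgrowth (x k)
      have h2 := hE k
      rw [hFxs] at h1
      rw [dist_comm] at h1
      have h3 : α / 2 * dist (x k) xs ^ 2 ≤ E0 * r ^ k := by linarith
      rw [div_mul_eq_mul_div, le_div_iff₀ hα]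
      linarith
    rw [hFxs]
    apply le_of_sq_le_sq' _ _ dist_nonneg (by positivity)
    have hc2 : Real.sqrt ((2 / α) * (F (x 0) - Fs)) ^ 2 = (2 / α) * E0 := by
      rw [← hE0def]
      exact Real.sq_sqrt (mul_nonneg (by positivity) hE0)
    have hq2 : Real.sqrt Q ^ 2 = Q := Real.sq_sqrt hQ0
    calc dist (x k) xs ^ 2 ≤ (2 / α) * (E0 * r ^ k) := hdk
      _ ≤ (2 / α) * (E0 * Q ^ k) := by
          have := pow_le_pow_left₀ hr0 hrQ k
          have h2α : (0:ℝ) ≤ 2 / α := by positivity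
          nlinarith
      _ = Real.sqrt ((2 / α) * (F (x 0) - Fs)) ^ 2 * (Real.sqrt Q ^ 2) ^ k := by
          rw [hc2, hq2]; ring
      _ = (Real.sqrt ((2 / α) * (F (x 0) - Fs)) * Real.sqrt Q ^ k) ^ 2 := by ring
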